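/- Monadic first-order logic with identity is closed under the removal modality: for every formula ψ(x) of MFOL_= with one free variable x and every formula φ(y) of MFOL_= with one free variable, the property 'there exists an object d ≠ x satisfying φ in the model M such that ψ holds of x in the submodel M - {d}' is again expressible by an MFOL_= formula with free variable x. In particular, the validity ⟨-(sd ∧ SD)⟩NF ↔ (SD ∧ ⟨-sd⟩NF) holds whenever SD is a sentence (no free variables), and ⟨-sd_i⟩(sd' ∧ SD) is equivalent to sd' ∧ SD[i := i+1], where SD[i := i+1] increments by one the count in the i-th conjunct of the global state description SD. -/

import Mathlib

/-- Monadic first-order logic with identity over unary predicates P₀,…,P_{k-1}: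
atomic Pᵢ(v), v = w, ¬, ∨, and ∃ over named variables. -/
inductive MF (k : ℕ) : Type where
  | P : Fin k → ℕ → MF k
  | eq : ℕ → ℕ → MF k
  | neg : MF k → MF k
  | or : MF k → MF k → MF k
  | ex : ℕ → MF k → MF k

/-- Satisfaction in a monadic structure (interpretation `I`, assignment `a`),
relative to a current domain `Dom` (so submodels can be formed by deletion). -/
def MSatD {k : ℕ} {W : Type} (Dom : Set W) (I : Fin k → W → Prop) :
    (ℕ → W) → MF k → Prop
  | a, .P i v => I i (a v)
  | a, .eq v w => a v = a w
  | a, .neg φ => ¬ MSatD Dom I a φ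
  | a, .or φ ψ => MSatD Dom I a φ ∨ MSatD Dom I a ψ
  | a, .ex v φ => ∃ w ∈ Dom, MSatD Dom I (Function.update a v w) φ

/-- Plain satisfaction (full domain). -/
def MSat {k : ℕ} {W : Type} (I : Fin k → W → Prop) (a : ℕ → W) (φ : MF k) : Prop :=
  MSatD Set.univ I a φ

def MF.and {k : ℕ} (a b : MF k) : MF k := .neg (.or (.neg a) (.neg b))
def mtop {k : ℕ} : MF k := .eq 0 0
def mbot {k : ℕ} : MF k := .neg mtop
def bigAndM {k : ℕ} (l : List (MF k)) : MF k := l.foldr MF.and mtop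
def bigOrM {k : ℕ} (l : List (MF k)) : MF k := l.foldr .or mbot

/-- Quantifier depth. -/
def qdepth {k : ℕ} : MF k → ℕ
  | .P _ _ => 0
  | .eq _ _ => 0
  | .neg φ => qdepth φ
  | .or φ ψ => max (qdepth φ) (qdepth ψ)
  | .ex _ φ => qdepth φ + 1

/-- Free variables. -/
def fv {k : ℕ} : MF k → Finset ℕ
  | .P _ v => {v}
  | .eq v w => {v, w}
  | .neg φ => fv φ
  | .or φ ψ => fv φ ∪ fv ψ
  | .ex v φ => fv φ \ {v}

/-- The local state description sd_σ applied to variable v: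
⋀ᵢ ±Pᵢ(v) according to σ. -/
def sdF {k : ℕ} (σ : Fin k → Bool) (v : ℕ) : MF k :=
  bigAndM ((List.finRange k).map fun i => if σ i then .P i v else .neg (.P i v))

/-- 'At least c objects satisfy sd_σ', using bound variables start,…,start+c-1. -/
noncomputable def atLeastF {k : ℕ} (σ : Fin k → Bool) (c start : ℕ) : MF k :=
  let vs := List.range' start c
  vs.foldr .ex
    (MF.and (bigAndM (vs.map (sdF σ)))
      (bigAndM ((vs.product vs).filterMap fun p =>
        if p.1 < p.2 then some (.neg (.eq p.1 p.2)) else none)))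

/-- 'Exactly c objects satisfy sd_σ'. -/
noncomputable def exactlyF {k : ℕ} (σ : Fin k → Bool) (c start : ℕ) : MF k :=
  MF.and (atLeastF σ c start) (.neg (atLeastF σ (c + 1) start))

/-- The list of all local state description patterns σ : Fin k → Bool. -/
noncomputable def sigList (k : ℕ) : List (Fin k → Bool) :=
  (Finset.univ : Finset (Fin k → Bool)).toList

/-- A global state description as data: for each σ, either (inl c) 'exactly c'
or (inr c) 'at least c'; its formula uses fresh bound variables from 1 on
(variable 0 is the distinguished free variable x). -/
noncomputable def toSDF {k : ℕ} (cnt : (Fin k → Bool) → ℕ ⊕ ℕ) : MF k :=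
  bigAndM ((sigList k).map fun σ =>
    match cnt σ with
    | .inl c => exactlyF σ c 1
    | .inr c => atLeastF σ c 1)

/-- SD[i := i+1]: increment the count of the state description σ₀ by one. -/
def bump {k : ℕ} (σ₀ : Fin k → Bool) (cnt : (Fin k → Bool) → ℕ ⊕ ℕ) :
    (Fin k → Bool) → ℕ ⊕ ℕ :=
  fun σ => if σ = σ₀ then
      (match cnt σ with
       | .inl c => .inl (c + 1)
       | .inr c => .inr (c + 1))
    else cnt σ

-- basic lemmas
section Basics
variable {k : ℕ} {W : Type} {D : Set W} {I : Fin k → W → Prop} {a : ℕ → W}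

@[simp] lemma msat_and {A B : MF k} :
    MSatD D I a (MF.and A B) ↔ MSatD D I a A ∧ MSatD D I a B := by
  simp [MF.and, MSatD]

@[simp] lemma msat_top : MSatD D I a (mtop : MF k) := by simp [mtop, MSatD]

lemma msat_bigAnd {l : List (MF k)} :
    MSatD D I a (bigAndM l) ↔ ∀ φ ∈ l, MSatD D I a φ := by
  induction l with
  | nil => simp [bigAndM]
  | cons h t ih =>
      have e : bigAndM (h :: t) = MF.and h (bigAndM t) := rfl
      rw [e, msat_and, ih]; simp

/-- agreement on free variables -/
lemma msat_agree {φ : MF k} {a b : ℕ → W} (h : ∀ v ∈ fv φ, a v = b v) :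
    MSatD D I a φ ↔ MSatD D I b φ := by
  induction φ generalizing a b with
  | P i v => simp [MSatD, h v (by simp [fv])]
  | eq v w => simp [MSatD, h v (by simp [fv]), h w (by simp [fv])]
  | neg φ ih => simp [MSatD]; rw [ih h]
  | or φ ψ ih1 ih2 =>
      simp [MSatD]
      rw [ih1 (fun v hv => h v (by simp [fv, hv])), ih2 (fun v hv => h v (by simp [fv, hv]))]
  | ex v φ ih =>
      simp only [MSatD]
      refine exists_congr fun w => and_congr_right fun _ => ih fun u hu => ?_
      by_cases huv : u = v
      · subst huv; simp
      · simp [Function.update_of_ne huv]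
        exact h u (by simp [fv, hu, huv])

def Patt (I : Fin k → W → Prop) (σ : Fin k → Bool) (d : W) : Prop :=
  ∀ i, I i d ↔ σ i = true

lemma msat_sdF {σ : Fin k → Bool} {v : ℕ} :
    MSatD D I a (sdF σ v) ↔ Patt I σ (a v) := by
  simp only [sdF, msat_bigAnd, List.mem_map, List.mem_finRange, Patt]
  constructor
  · intro h i
    have := h _ ⟨i, trivial, rfl⟩
    by_cases hσ : σ i <;> simp [hσ, MSatD] at this ⊢ <;> tauto
  · rintro h φ ⟨i, -, rfl⟩
    by_cases hσ : σ i <;> simp [hσ, MSatD] <;> [exact (h i).2 hσ; simpa [hσ] using (h i)]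

lemma patt_unique {σ σ' : Fin k → Bool} {d : W} (h : Patt I σ d) (h' : Patt I σ' d) :
    σ = σ' := by
  funext i
  have := (h i).symm.trans (h' i)
  cases hh : σ i <;> cases hh' : σ' i <;> simp [hh, hh'] at this ⊢ <;> tauto

end Basics

section Unfold
variable {k : ℕ} {W : Type} {D : Set W} {I : Fin k → W → Prop} {a : ℕ → W}
@[simp] lemma msat_P {i : Fin k} {v : ℕ} : MSatD D I a (.P i v) ↔ I i (a v) := by simp [MSatD]
@[simp] lemma msat_eqf {v w : ℕ} : MSatD D I a (.eq v w) ↔ a v = a w := by simp [MSatD]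
@[simp] lemma msat_neg {φ : MF k} : MSatD D I a (.neg φ) ↔ ¬ MSatD D I a φ := by simp [MSatD]
@[simp] lemma msat_or {φ ψ : MF k} :
    MSatD D I a (.or φ ψ) ↔ MSatD D I a φ ∨ MSatD D I a ψ := by simp [MSatD]
lemma msat_ex {v : ℕ} {φ : MF k} :
    MSatD D I a (.ex v φ) ↔ ∃ w ∈ D, MSatD D I (Function.update a v w) φ := by simp [MSatD]
end Unfold

-- bound variables
def bv {k : ℕ} : MF k → Finset ℕ
  | .P _ _ => ∅
  | .eq _ _ => ∅
  | .neg φ => bv φ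
  | .or φ ψ => bv φ ∪ bv ψ
  | .ex v φ => insert v (bv φ)

/-- rename free occurrences of x to y -/
def ren {k : ℕ} (x y : ℕ) : MF k → MF k
  | .P i v => .P i (if v = x then y else v)
  | .eq v w => .eq (if v = x then y else v) (if w = x then y else w)
  | .neg φ => .neg (ren x y φ)
  | .or φ ψ => .or (ren x y φ) (ren x y ψ)
  | .ex v φ => if v = x then .ex v φ else .ex v (ren x y φ)

/-- relativize all quantifiers to ≠ t -/
def relz {k : ℕ} (t : ℕ) : MF k → MF k
  | .P i v => .P i v
  | .eq v w => .eq v w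
  | .neg φ => .neg (relz t φ)
  | .or φ ψ => .or (relz t φ) (relz t ψ)
  | .ex v φ => .ex v (MF.and (.neg (.eq v t)) (relz t φ))

section RenRel
variable {k : ℕ} {W : Type} {D : Set W} {I : Fin k → W → Prop}

lemma fv_ren {x y : ℕ} {φ : MF k} : fv (ren x y φ) ⊆ (fv φ \ {x}) ∪ {y} := by
  induction φ with
  | P i v =>
      intro u hu
      by_cases h : v = x <;> simp [ren, h, fv] at hu ⊢ <;> omega
  | eq v w =>
      intro u hu
      by_cases h : v = x <;> by_cases h' : w = x <;> simp [ren, h, h', fv] at hu ⊢ <;> omega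
  | neg φ ih => simpa [ren, fv] using ih
  | or φ ψ ih1 ih2 =>
      simp only [ren, fv]
      intro u hu
      rcases Finset.mem_union.1 hu with h | h
      · have := ih1 h; simp at this ⊢; tauto
      · have := ih2 h; simp at this ⊢; tauto
  | ex v φ ih =>
      by_cases h : v = x
      · subst h
        simp only [ren, if_pos rfl, fv, ↓reduceIte]
        intro u hu
        simp only [Finset.mem_sdiff, Finset.mem_singleton, Finset.mem_union] at hu ⊢
        tauto
      · simp only [ren, if_neg h, fv]
        intro u hu
        simp only [Finset.mem_sdiff, Finset.mem_singleton] at hu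
        have := ih hu.1; simp at this ⊢; tauto

lemma fv_relz {t : ℕ} {φ : MF k} : fv (relz t φ) ⊆ fv φ ∪ {t} := by
  induction φ with
  | P i v => simp [relz, fv]
  | eq v w =>
      intro u hu; simp [relz, fv] at hu ⊢; omega
  | neg φ ih => simpa [relz, fv] using ih
  | or φ ψ ih1 ih2 =>
      simp only [relz, fv]
      intro u hu
      rcases Finset.mem_union.1 hu with h | h
      · have := ih1 h; simp at this ⊢; tauto
      · have := ih2 h; simp at this ⊢; tauto
  | ex v φ ih =>
      simp only [relz, fv, MF.and]
      intro u hu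
      simp only [Finset.mem_sdiff, Finset.mem_singleton] at hu
      obtain ⟨hu1, hu2⟩ := hu
      simp only [fv, Finset.mem_union, Finset.mem_insert, Finset.mem_singleton] at hu1
      rcases hu1 with (h | h) | h
      · exact absurd h hu2
      · simp [h]
      · have := ih h; simp at this ⊢; tauto

lemma msat_ren {x y : ℕ} {φ : MF k} (hxy : x ≠ y) (hby : y ∉ bv φ) {a : ℕ → W} :
    MSatD D I a (ren x y φ) ↔ MSatD D I (Function.update a x (a y)) φ := by
  induction φ generalizing a with
  | P i v =>
      have key : Function.update a x (a y) v = a (if v = x then y else v) := by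
        by_cases h : v = x
        · subst h; simp
        · simp [h]
      simp [ren, key]
  | eq v w =>
      have key : ∀ u, Function.update a x (a y) u = a (if u = x then y else u) := by
        intro u
        by_cases h : u = x
        · subst h; simp
        · simp [h]
      simp [ren, key]
  | neg φ ih => simp only [ren, msat_neg]; rw [ih hby]
  | or φ ψ ih1 ih2 =>
      simp only [ren, msat_or, bv] at hby ⊢
      rw [ih1 (fun h => hby (Finset.mem_union_left _ h)),
          ih2 (fun h => hby (Finset.mem_union_right _ h))]
  | ex v φ ih =>
      simp only [bv, Finset.mem_insert] at hby
      push_neg at hby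
      obtain ⟨hvy, hby⟩ := hby
      by_cases h : v = x
      · subst h
        simp only [ren, if_pos rfl, msat_ex]
        refine exists_congr fun w => and_congr_right fun _ => ?_
        rw [show Function.update (Function.update a v (a y)) v w = Function.update a v w by
          simp [Function.update_idem]]
      · simp only [ren, if_neg h, msat_ex]
        refine exists_congr fun w => and_congr_right fun _ => ?_
        rw [ih hby, Function.update_of_ne hvy, Function.update_comm h]

lemma msat_relz {t : ℕ} {φ : MF k} (hbt : t ∉ bv φ) {a : ℕ → W} :
    MSatD (Set.univ \ {a t}) I a φ ↔ MSatD Set.univ I a (relz t φ) := by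
  induction φ generalizing a with
  | P i v => simp [relz]
  | eq v w => simp [relz]
  | neg φ ih => simp only [relz, msat_neg]; rw [ih hbt]
  | or φ ψ ih1 ih2 =>
      simp only [relz, msat_or, bv] at hbt ⊢
      rw [ih1 (fun h => hbt (Finset.mem_union_left _ h)),
          ih2 (fun h => hbt (Finset.mem_union_right _ h))]
  | ex v φ ih =>
      simp only [bv, Finset.mem_insert] at hbt
      push_neg at hbt
      obtain ⟨hvt, hbt⟩ := hbt
      simp only [relz, msat_ex, msat_and, msat_neg, msat_eqf, Set.mem_univ, true_and,
        Set.mem_diff, Set.mem_singleton_iff]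
      have upd : ∀ w : W, Function.update a v w t = a t :=
        fun w => Function.update_of_ne hvt _ _
      constructor
      · rintro ⟨w, hwne, hφ⟩
        refine ⟨w, ?_, ?_⟩
        · simp [upd w, hwne]
        · rw [← ih hbt, upd w]; exact hφ
      · rintro ⟨w, hne, hφ⟩
        rw [Function.update_self, upd w] at hne
        rw [← ih hbt, upd w] at hφ
        exact ⟨w, hne, hφ⟩

end RenRel

/-- a bound above all variables -/
def mvar {k : ℕ} : MF k → ℕ
  | .P _ v => v + 1
  | .eq v w => max v w + 1
  | .neg φ => mvar φ
  | .or φ ψ => max (mvar φ) (mvar ψ)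
  | .ex v φ => max (v + 1) (mvar φ)

lemma bv_lt_mvar {k : ℕ} {φ : MF k} {v : ℕ} (h : v ∈ bv φ) : v < mvar φ := by
  induction φ with
  | P i w => simp [bv] at h
  | eq v w => simp [bv] at h
  | neg φ ih => exact ih h
  | or φ ψ ih1 ih2 =>
      simp only [bv, Finset.mem_union] at h
      rcases h with h | h
      · exact lt_of_lt_of_le (ih1 h) (le_max_left _ _)
      · exact lt_of_lt_of_le (ih2 h) (le_max_right _ _)
  | ex u φ ih =>
      simp only [bv, Finset.mem_insert] at h
      rcases h with rfl | h
      · simp [mvar]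
      · exact lt_of_lt_of_le (ih h) (le_max_right _ _)


section Counting
variable {k : ℕ} {W : Type} {D : Set W} {I : Fin k → W → Prop}

lemma msat_foldEx {vs : List ℕ} (hnd : vs.Nodup) {θ : MF k} {a : ℕ → W} :
    MSatD D I a (vs.foldr .ex θ) ↔
      ∃ b : ℕ → W, (∀ v ∈ vs, b v ∈ D) ∧ (∀ v, v ∉ vs → b v = a v) ∧ MSatD D I b θ := by
  induction vs generalizing a with
  | nil =>
      simp only [List.foldr_nil, List.not_mem_nil]
      constructor
      · intro h; exact ⟨a, by simp, fun _ _ => rfl, h⟩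
      · rintro ⟨b, -, hb, h⟩
        have : b = a := funext fun v => hb v (by simp)
        rwa [this] at h
  | cons v vs ih =>
      obtain ⟨hv, hnd'⟩ := List.nodup_cons.1 hnd
      simp only [List.foldr_cons, msat_ex]
      constructor
      · rintro ⟨w, hw, h⟩
        obtain ⟨b, h1, h2, h3⟩ := (ih hnd').1 h
        have hbv : b v = w := by rw [h2 v hv, Function.update_self]
        refine ⟨b, ?_, ?_, h3⟩
        · intro u hu
          rcases List.mem_cons.1 hu with rfl | hu
          · rw [hbv]; exact hw
          · exact h1 u hu
        · intro u hu
          rw [List.mem_cons] at hu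
          push_neg at hu
          rw [h2 u hu.2, Function.update_of_ne hu.1]
      · rintro ⟨b, h1, h2, h3⟩
        refine ⟨b v, h1 v List.mem_cons_self, ?_⟩
        refine (ih hnd').2 ⟨b, fun u hu => h1 u (List.mem_cons_of_mem _ hu), ?_, h3⟩
        intro u hu
        by_cases huv : u = v
        · subst huv; simp
        · rw [Function.update_of_ne huv]
          exact h2 u (by simp [huv, hu])

lemma fin_le_encard {S : Set W} {c : ℕ} :
    (∃ f : Fin c → W, Function.Injective f ∧ ∀ j, f j ∈ S) ↔ (c : ℕ∞) ≤ S.encard := by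
  constructor
  · rintro ⟨f, hinj, hf⟩
    have h1 : (Set.range f).encard = c := by
      rw [← Set.image_univ, hinj.encard_image, Set.encard_univ]
      simp
    rw [← h1]
    exact Set.encard_le_encard (Set.range_subset_iff.2 hf)
  · intro h
    obtain ⟨t, hts, htc⟩ := Set.exists_subset_encard_eq h
    have hfin : t.Finite := Set.finite_of_encard_eq_coe htc
    have hcard : hfin.toFinset.card = c := by
      rw [Set.Finite.encard_eq_coe_toFinset_card hfin] at htc
      exact_mod_cast htc
    let e : hfin.toFinset ≃ Fin hfin.toFinset.card := hfin.toFinset.equivFin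
    refine ⟨fun j => (e.symm (Fin.cast hcard.symm j) : W), ?_, ?_⟩
    · intro j j' hjj
      have := Subtype.coe_injective hjj
      have := e.symm.injective this
      simpa [Fin.ext_iff] using this
    · intro j
      have : ((e.symm (Fin.cast hcard.symm j)) : W) ∈ hfin.toFinset :=
        (e.symm (Fin.cast hcard.symm j)).2
      exact hts (hfin.mem_toFinset.1 this)

lemma msat_atLeast {σ : Fin k → Bool} {c start : ℕ} {a : ℕ → W} :
    MSatD D I a (atLeastF σ c start) ↔
      (c : ℕ∞) ≤ {w | w ∈ D ∧ Patt I σ w}.encard := by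
  rw [← fin_le_encard]
  simp only [atLeastF]
  rw [msat_foldEx List.nodup_range']
  have hmem : ∀ m : ℕ, m ∈ List.range' start c ↔ start ≤ m ∧ m < start + c := by
    intro m; rw [List.mem_range']; constructor
    · rintro ⟨i, hi, rfl⟩; omega
    · intro h; exact ⟨m - start, by omega, by omega⟩
  constructor
  · rintro ⟨b, hbD, -, hbody⟩
    obtain ⟨h1, h2⟩ := msat_and.1 hbody
    rw [msat_bigAnd] at h1 h2
    have hpat : ∀ v ∈ List.range' start c, Patt I σ (b v) := by
      intro v hv
      have := h1 _ (List.mem_map.2 ⟨v, hv, rfl⟩)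
      exact msat_sdF.1 this
    have hne : ∀ u v, u ∈ List.range' start c → v ∈ List.range' start c → u < v →
        b u ≠ b v := by
      intro u v hu hv huv
      have hf : (MF.neg (.eq u v) : MF k) ∈
          ((List.range' start c).product (List.range' start c)).filterMap
            (fun p => if p.1 < p.2 then some (.neg (.eq p.1 p.2)) else none) := by
        rw [List.mem_filterMap]
        exact ⟨(u, v), List.mem_product.2 ⟨hu, hv⟩, by simp [huv]⟩
      have := h2 _ hf
      simpa using this
    refine ⟨fun j => b (start + j), ?_, ?_⟩
    · intro j j' hjj
      by_contra hne'
      rcases Nat.lt_or_ge (start + (j : ℕ)) (start + (j' : ℕ)) with hlt | hge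
      · exact hne _ _ ((hmem _).2 (by omega)) ((hmem _).2 (by omega)) hlt hjj
      · have hlt : start + (j' : ℕ) < start + (j : ℕ) := by
          rcases Nat.lt_or_ge (start + (j' : ℕ)) (start + (j : ℕ)) with h' | h'
          · exact h'
          · exfalso; apply hne'; ext; omega
        exact hne _ _ ((hmem _).2 (by omega)) ((hmem _).2 (by omega)) hlt hjj.symm
    · intro j
      have hj : start + (j : ℕ) ∈ List.range' start c := (hmem _).2 (by omega)
      exact ⟨hbD _ hj, hpat _ hj⟩
  · rintro ⟨f, hinj, hf⟩
    classical
    refine ⟨fun v => if h : start ≤ v ∧ v < start + c then f ⟨v - start, by omega⟩ else a v,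
      ?_, ?_, ?_⟩
    · intro v hv
      rw [hmem] at hv
      simp only [dif_pos hv]
      exact (hf _).1
    · intro v hv
      rw [hmem] at hv
      simp only [dif_neg hv]
    · rw [msat_and]
      constructor
      · rw [msat_bigAnd]
        rintro φ hφ
        obtain ⟨v, hv, rfl⟩ := List.mem_map.1 hφ
        rw [msat_sdF]
        rw [hmem] at hv
        simp only [dif_pos hv]
        exact (hf _).2
      · rw [msat_bigAnd]
        rintro φ hφ
        obtain ⟨⟨u, v⟩, hp, hsome⟩ := List.mem_filterMap.1 hφ
        obtain ⟨hu, hv⟩ := List.mem_product.1 hp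
        rw [hmem] at hu hv
        by_cases huv : u < v
        · rw [if_pos huv, Option.some_inj] at hsome
          subst hsome
          simp only [msat_neg, msat_eqf, dif_pos hu, dif_pos hv]
          intro hcon
          have := hinj hcon
          simp [Fin.ext_iff] at this
          omega
        · rw [if_neg huv] at hsome; exact absurd hsome (by simp)

lemma msat_exactly {σ : Fin k → Bool} {c start : ℕ} {a : ℕ → W} :
    MSatD D I a (exactlyF σ c start) ↔
      {w | w ∈ D ∧ Patt I σ w}.encard = c := by
  simp only [exactlyF, msat_and, msat_neg, msat_atLeast]
  constructor
  · rintro ⟨h1, h2⟩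
    refine le_antisymm ?_ h1
    by_contra hgt
    push_neg at hgt
    apply h2
    rw [show ((c + 1 : ℕ) : ℕ∞) = (c : ℕ∞) + 1 by push_cast; ring]
    exact ENat.add_one_le_iff (by simp) |>.2 hgt
  · intro h
    refine ⟨h.ge, ?_⟩
    rw [show ((c + 1 : ℕ) : ℕ∞) = (c : ℕ∞) + 1 by push_cast; ring,
      ENat.add_one_le_iff (show (c:ℕ∞) ≠ ⊤ by simp), h]
    simp

def SDsem (D : Set W) (I : Fin k → W → Prop) (cnt : (Fin k → Bool) → ℕ ⊕ ℕ) : Prop :=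
  ∀ σ : Fin k → Bool,
    match cnt σ with
    | .inl c => {w | w ∈ D ∧ Patt I σ w}.encard = c
    | .inr c => (c : ℕ∞) ≤ {w | w ∈ D ∧ Patt I σ w}.encard

lemma msat_toSDF {cnt : (Fin k → Bool) → ℕ ⊕ ℕ} {a : ℕ → W} :
    MSatD D I a (toSDF cnt) ↔ SDsem D I cnt := by
  simp only [toSDF, msat_bigAnd, List.mem_map, sigList, Finset.mem_toList, Finset.mem_univ,
    true_and, SDsem]
  constructor
  · intro h σ
    have := h _ ⟨σ, rfl⟩
    rcases hcσ : cnt σ with c | c <;> simp only [hcσ] at this ⊢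
    · exact msat_exactly.1 this
    · exact msat_atLeast.1 this
  · rintro h φ ⟨σ, rfl⟩
    have := h σ
    rcases hcσ : cnt σ with c | c <;> simp only [hcσ] at this ⊢
    · exact msat_exactly.2 this
    · exact msat_atLeast.2 this

end Counting

section Parts
variable {k : ℕ}

theorem part1 (φ ψ : MF k) (hφ : fv φ ⊆ {0}) (hψ : fv ψ ⊆ {0}) :
    ∃ χ : MF k, fv χ ⊆ {0} ∧
      ∀ (W : Type) (I : Fin k → W → Prop) (a : ℕ → W),
        ((∃ d : W, d ≠ a 0 ∧ MSatD Set.univ I (Function.update a 0 d) φ ∧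
            MSatD (Set.univ \ {d}) I a ψ) ↔ MSatD Set.univ I a χ) := by
  set t : ℕ := mvar φ + mvar ψ + 1 with ht
  have ht0 : (0 : ℕ) ≠ t := by omega
  have htφ : t ∉ bv φ := fun h => by have := bv_lt_mvar h; omega
  have htψ : t ∉ bv ψ := fun h => by have := bv_lt_mvar h; omega
  refine ⟨.ex t (MF.and (.neg (.eq t 0)) (MF.and (ren 0 t φ) (relz t ψ))), ?_, ?_⟩
  · intro u hu
    simp only [fv, MF.and, Finset.mem_sdiff, Finset.mem_union, Finset.mem_insert,
      Finset.mem_singleton] at hu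
    obtain ⟨hu1, hu2⟩ := hu
    rcases hu1 with (rfl | rfl) | (h | h)
    · exact absurd rfl hu2
    · simp
    · have := fv_ren h
      simp only [Finset.mem_union, Finset.mem_sdiff, Finset.mem_singleton] at this
      rcases this with ⟨h1, -⟩ | h1
      · have := hφ h1; simp at this ⊢; tauto
      · exact absurd h1 hu2
    · have := fv_relz h
      simp only [Finset.mem_union, Finset.mem_singleton] at this
      rcases this with h1 | h1
      · have := hψ h1; simp at this ⊢; tauto
      · exact absurd h1 hu2
  · intro W I a
    rw [msat_ex]
    refine exists_congr fun w => ?_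
    simp only [Set.mem_univ, true_and, msat_and, msat_neg, msat_eqf]
    have h1 : Function.update a t w t = w := Function.update_self _ _ _
    have h2 : Function.update a t w 0 = a 0 := Function.update_of_ne ht0 _ _
    have hren : MSatD Set.univ I (Function.update a t w) (ren 0 t φ) ↔
        MSatD Set.univ I (Function.update a 0 w) φ := by
      rw [msat_ren ht0 htφ]
      apply msat_agree
      intro v hv
      have hv0 : v = 0 := by simpa using hφ hv
      subst hv0
      simp [h1]
    have hrel : MSatD Set.univ I (Function.update a t w) (relz t ψ) ↔
        MSatD (Set.univ \ {w}) I a ψ := by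
      rw [← msat_relz htψ, h1]
      apply msat_agree
      intro v hv
      have hv0 : v = 0 := by simpa using hψ hv
      subst hv0
      exact h2
    rw [hren, hrel, h1, h2]

theorem part2 (σ : Fin k → Bool) (SD NF : MF k) (hSD : fv SD = ∅)
    (W : Type) (I : Fin k → W → Prop) (a : ℕ → W) :
    ((∃ d : W, d ≠ a 0 ∧
        MSatD Set.univ I (Function.update a 0 d) (MF.and (sdF σ 0) SD) ∧
        MSatD (Set.univ \ {d}) I a NF) ↔
     (MSatD Set.univ I a SD ∧
      ∃ d : W, d ≠ a 0 ∧ MSatD Set.univ I (Function.update a 0 d) (sdF σ 0) ∧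
        MSatD (Set.univ \ {d}) I a NF)) := by
  have agr : ∀ d : W, MSatD Set.univ I (Function.update a 0 d) SD ↔ MSatD Set.univ I a SD :=
    fun d => msat_agree (fun v hv => absurd hv (by simp [hSD]))
  constructor
  · rintro ⟨d, hd, hand, hNF⟩
    obtain ⟨h1, h2⟩ := msat_and.1 hand
    exact ⟨(agr d).1 h2, d, hd, h1, hNF⟩
  · rintro ⟨hSDa, d, hd, h1, hNF⟩
    exact ⟨d, hd, msat_and.2 ⟨h1, (agr d).2 hSDa⟩, hNF⟩

theorem part3 (σi σ' : Fin k → Bool) (cnt : (Fin k → Bool) → ℕ ⊕ ℕ)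
    (hcnt : match cnt σ' with | .inl c => 1 ≤ c | .inr c => 1 ≤ c)
    (W : Type) (I : Fin k → W → Prop) (a : ℕ → W) :
    ((∃ d : W, d ≠ a 0 ∧ MSatD Set.univ I (Function.update a 0 d) (sdF σi 0) ∧
        MSatD (Set.univ \ {d}) I a (MF.and (sdF σ' 0) (toSDF cnt))) ↔
     (MSatD Set.univ I a (sdF σ' 0) ∧
      MSatD Set.univ I a (toSDF (bump σi cnt)))) := by
  classical
  have hsetfull : ∀ σ : Fin k → Bool,
      {w | w ∈ (Set.univ : Set W) ∧ Patt I σ w} = {w | Patt I σ w} := by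
    intro σ; ext w; simp
  have hsetdel : ∀ (σ : Fin k → Bool) (d : W),
      {w | w ∈ (Set.univ \ {d} : Set W) ∧ Patt I σ w} = {w | Patt I σ w} \ {d} := by
    intro σ d; ext w; simp [Set.mem_diff, and_comm]
  simp only [msat_and, msat_sdF, msat_toSDF, Function.update_self]
  constructor
  · rintro ⟨d, hda, hdσ, hσ', hsd⟩
    refine ⟨hσ', ?_⟩
    intro σ
    have hsdσ := hsd σ
    have hdmem : d ∈ {w : W | Patt I σi w} := hdσ
    by_cases hσσ : σ = σi
    · subst hσσ
      simp only [bump, eq_self_iff_true, if_true]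
      rcases hc : cnt σ with c | c <;> simp only [hc] at hsdσ ⊢ <;>
        rw [hsetfull] <;> rw [hsetdel] at hsdσ
      · rw [← Set.encard_diff_singleton_add_one hdmem, hsdσ]
        push_cast; ring
      · rw [← Set.encard_diff_singleton_add_one hdmem]
        push_cast
        exact add_le_add_left hsdσ 1
    · have hdnot : d ∉ {w : W | Patt I σ w} := fun h => hσσ (patt_unique h hdσ)
      rcases hc : cnt σ with c | c <;> simp only [bump, if_neg hσσ, hc] at hsdσ ⊢ <;>
        rw [hsetfull] <;> rw [hsetdel, Set.diff_singleton_eq_self hdnot] at hsdσ <;>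
        exact hsdσ
  · rintro ⟨hσ', hsd⟩
    have hb := hsd σi
    simp only [bump, eq_self_iff_true, if_true] at hb
    -- find a witness d ∈ Patt σi, d ≠ a 0
    have hwit : ∃ d : W, Patt I σi d ∧ d ≠ a 0 := by
      by_cases hσis : σi = σ'
      · subst hσis
        have hge2 : 1 < {w : W | Patt I σi w}.encard := by
          rcases hc : cnt σi with c | c <;> simp only [hc] at hb hcnt <;>
            rw [hsetfull] at hb
          · rw [hb]; exact_mod_cast by omega
          · refine lt_of_lt_of_le ?_ hb
            exact_mod_cast by omega
        obtain ⟨d, hd, hda⟩ := Set.exists_ne_of_one_lt_encard hge2 (a 0)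
        exact ⟨d, hd, hda⟩
      · have hpos : 0 < {w : W | Patt I σi w}.encard := by
          rcases hc : cnt σi with c | c <;> simp only [hc] at hb <;> rw [hsetfull] at hb
          · rw [hb]; exact_mod_cast by omega
          · refine lt_of_lt_of_le ?_ hb
            exact_mod_cast by omega
        obtain ⟨d, hd⟩ := Set.encard_pos.1 hpos
        exact ⟨d, hd, fun h => hσis (patt_unique (h ▸ hd) hσ')⟩
    obtain ⟨d, hdσ, hda⟩ := hwit
    refine ⟨d, hda, hdσ, hσ', ?_⟩
    intro σ
    have hsdσ := hsd σ
    have hdmem : d ∈ {w : W | Patt I σi w} := hdσ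
    by_cases hσσ : σ = σi
    · subst hσσ
      simp only [bump, eq_self_iff_true, if_true] at hsdσ
      rcases hc : cnt σ with c | c <;> simp only [hc] at hsdσ ⊢ <;>
        rw [hsetfull, ← Set.encard_diff_singleton_add_one hdmem] at hsdσ <;>
        rw [hsetdel]
      · rw [show ((c + 1 : ℕ) : ℕ∞) = (c : ℕ∞) + 1 by push_cast; ring] at hsdσ
        exact (ENat.add_left_injective_of_ne_top (by simp)) hsdσ
      · rw [show ((c + 1 : ℕ) : ℕ∞) = (c : ℕ∞) + 1 by push_cast; ring] at hsdσ
        exact (ENat.add_le_add_iff_right (by simp)).1 hsdσ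
    · have hdnot : d ∉ {w : W | Patt I σ w} := fun h => hσσ (patt_unique h hdσ)
      rcases hc : cnt σ with c | c <;> simp only [bump, if_neg hσσ, hc] at hsdσ ⊢ <;>
        rw [hsetfull] at hsdσ <;> rw [hsetdel, Set.diff_singleton_eq_self hdnot] <;>
        exact hsdσ

end Parts

/-- MFOL₌ is closed under the removal modality, and the two key equivalences:
⟨-(sd ∧ SD)⟩NF ↔ (SD ∧ ⟨-sd⟩NF) for sentences SD, and
⟨-sd_i⟩(sd' ∧ SD) ↔ (sd' ∧ SD[i := i+1]) (for SD consistent with sd'). -/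
theorem stmt17 (k : ℕ) :
    (∀ φ ψ : MF k, fv φ ⊆ {0} → fv ψ ⊆ {0} →
      ∃ χ : MF k, fv χ ⊆ {0} ∧
        ∀ (W : Type) (I : Fin k → W → Prop) (a : ℕ → W),
          ((∃ d : W, d ≠ a 0 ∧ MSatD Set.univ I (Function.update a 0 d) φ ∧
              MSatD (Set.univ \ {d}) I a ψ) ↔ MSatD Set.univ I a χ)) ∧
    (∀ (σ : Fin k → Bool) (SD NF : MF k), fv SD = ∅ → fv NF ⊆ {0} →
      ∀ (W : Type) (I : Fin k → W → Prop) (a : ℕ → W),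
        ((∃ d : W, d ≠ a 0 ∧
            MSatD Set.univ I (Function.update a 0 d) (MF.and (sdF σ 0) SD) ∧
            MSatD (Set.univ \ {d}) I a NF) ↔
         (MSatD Set.univ I a SD ∧
          ∃ d : W, d ≠ a 0 ∧ MSatD Set.univ I (Function.update a 0 d) (sdF σ 0) ∧
            MSatD (Set.univ \ {d}) I a NF))) ∧
    (∀ (σi σ' : Fin k → Bool) (cnt : (Fin k → Bool) → ℕ ⊕ ℕ),
      (match cnt σ' with | .inl c => 1 ≤ c | .inr c => 1 ≤ c) →
      ∀ (W : Type) (I : Fin k → W → Prop) (a : ℕ → W),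
        ((∃ d : W, d ≠ a 0 ∧ MSatD Set.univ I (Function.update a 0 d) (sdF σi 0) ∧
            MSatD (Set.univ \ {d}) I a (MF.and (sdF σ' 0) (toSDF cnt))) ↔
         (MSatD Set.univ I a (sdF σ' 0) ∧
          MSatD Set.univ I a (toSDF (bump σi cnt))))) := by
  refine ⟨fun φ ψ hφ hψ => part1 φ ψ hφ hψ,
    fun σ SD NF hSD _hNF W I a => part2 σ SD NF hSD W I a,
    fun σi σ' cnt hcnt W I a => part3 σi σ' cnt hcnt W I a⟩
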